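/- For any linear subspace W ⊆ R^n and any subset J ⊆ [n], both the restriction W_J = π_J(W ∩ R^n_J) and the projection π_J(W) have circuit imbalance at most κ_W. -/

import Mathlib

open Finset

variable {ι : Type*} [Fintype ι] [DecidableEq ι]

/-- `y` conforms to `x` if `x i * y i > 0` whenever `y i ≠ 0`. -/
def Conforms (y x : ι → ℝ) : Prop := ∀ i, y i ≠ 0 → x i * y i > 0

/-- An elementary vector of `W`: a support-minimal nonzero vector of `W`. -/
def IsElementary (W : Submodule ℝ (ι → ℝ)) (g : ι → ℝ) : Prop :=
  g ∈ W ∧ g ≠ 0 ∧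
    ∀ h ∈ W, h ≠ 0 → {i | h i ≠ 0} ⊆ {i | g i ≠ 0} → {i | h i ≠ 0} = {i | g i ≠ 0}

/-- The fractional circuit imbalance measure `κ_W`. -/
noncomputable def kappa (W : Submodule ℝ (ι → ℝ)) : ℝ :=
  sSup ({1} ∪ {t : ℝ | ∃ g : ι → ℝ, IsElementary W g ∧
    ∃ i j, g i ≠ 0 ∧ g j ≠ 0 ∧ t = |g j| / |g i|})

/-- An integer elementary vector, normalized so that the gcd of its entries is 1. -/
def IsIntElementary (W : Submodule ℝ (ι → ℝ)) (g : ι → ℤ) : Prop :=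
  IsElementary W (fun i => (g i : ℝ)) ∧ Finset.univ.gcd (fun i => (g i).natAbs) = 1

/-- The max-circuit imbalance measure `κ̄_W`. -/
noncomputable def barKappa (W : Submodule ℝ (ι → ℝ)) : ℕ :=
  sSup {k : ℕ | ∃ g : ι → ℤ, IsIntElementary W g ∧
    k = Finset.univ.sup fun i => (g i).natAbs}

/-- The lcm-circuit imbalance measure `κ̇_W`: the least positive integer divisible by
every entry of every normalized integer elementary vector. -/
noncomputable def dotKappa (W : Submodule ℝ (ι → ℝ)) : ℕ :=
  sInf {k : ℕ | 0 < k ∧ ∀ g : ι → ℤ, IsIntElementary W g → ∀ i, g i ≠ 0 → (g i).natAbs ∣ k}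

/-- A rational linear subspace: one spanned by rational vectors. -/
def IsRationalSubspace (W : Submodule ℝ (ι → ℝ)) : Prop :=
  ∃ S : Set (ι → ℚ), W = Submodule.span ℝ ((fun v : ι → ℚ => fun i => ((v i : ℝ))) '' S)

/-- The orthogonal complement of `W` in `ℝ^ι` with the standard inner product. -/
def orthComp (W : Submodule ℝ (ι → ℝ)) : Submodule ℝ (ι → ℝ) where
  carrier := {v | ∀ w ∈ W, ∑ i, v i * w i = 0}
  add_mem' := by
    intro a b ha hb w hw
    have := ha w hw
    have := hb w hw
    simp only [Set.mem_setOf_eq, Pi.add_apply, add_mul, Finset.sum_add_distrib, *]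
    ring
  zero_mem' := by intro w hw; simp
  smul_mem' := by
    intro c a ha w hw
    have h := ha w hw
    simp only [Set.mem_setOf_eq, Pi.smul_apply, smul_eq_mul, mul_assoc, ← Finset.mul_sum, h,
      mul_zero]

/-- The coordinate projection `π_J` as a linear map. -/
def coordRestrict {n : ℕ} (J : Finset (Fin n)) : (Fin n → ℝ) →ₗ[ℝ] (↥J → ℝ) :=
  LinearMap.funLeft ℝ ℝ (fun i : ↥J => (i : Fin n))

/-- The subspace `ℝ^n_J` of vectors vanishing outside `J`. -/
def zeroOutside {n : ℕ} (J : Finset (Fin n)) : Submodule ℝ (Fin n → ℝ) where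
  carrier := {x | ∀ i, i ∉ J → x i = 0}
  add_mem' := by intro a b ha hb i hi; simp [ha i hi, hb i hi]
  zero_mem' := by intro i _; rfl
  smul_mem' := by intro c a ha i hi; simp [ha i hi]


def ratioSet (W : Submodule ℝ (ι → ℝ)) : Set ℝ :=
  {t : ℝ | ∃ g : ι → ℝ, IsElementary W g ∧
    ∃ i j, g i ≠ 0 ∧ g j ≠ 0 ∧ t = |g j| / |g i|}

lemma kappa_eq (W : Submodule ℝ (ι → ℝ)) : kappa W = sSup ({1} ∪ ratioSet W) := rfl

/-- Two elementary vectors with the same support are proportional. -/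
lemma elementary_prop {W : Submodule ℝ (ι → ℝ)} {g h : ι → ℝ}
    (hg : IsElementary W g) (hh : IsElementary W h)
    (hs : {i | g i ≠ 0} = {i | h i ≠ 0}) : ∃ t : ℝ, t ≠ 0 ∧ g = t • h := by
  obtain ⟨hgW, hgne, hgmin⟩ := hg
  obtain ⟨hhW, hhne, _⟩ := hh
  obtain ⟨i0, hi0⟩ : ∃ i, g i ≠ 0 := by
    by_contra hc; push_neg at hc; exact hgne (funext hc)
  have hs' : ∀ i, g i ≠ 0 ↔ h i ≠ 0 := fun i => Set.ext_iff.mp hs i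
  have hhi0 : h i0 ≠ 0 := (hs' i0).mp hi0
  refine ⟨g i0 / h i0, div_ne_zero hi0 hhi0, ?_⟩
  set t := g i0 / h i0 with ht
  have hd : g - t • h ∈ W := W.sub_mem hgW (W.smul_mem _ hhW)
  by_contra hne
  have hdne : g - t • h ≠ 0 := by
    intro h0; apply hne; have := sub_eq_zero.mp h0; exact this
  have hsub : {i | (g - t • h) i ≠ 0} ⊆ {i | g i ≠ 0} := by
    intro i hi
    simp only [Set.mem_setOf_eq, Pi.sub_apply, Pi.smul_apply, smul_eq_mul] at hi ⊢
    intro hgi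
    apply hi
    have : h i = 0 := by
      by_contra hhi
      exact (hs' i).mpr hhi hgi
    simp [hgi, this]
  have := hgmin _ hd hdne hsub
  have hi0' : i0 ∈ {i | (g - t • h) i ≠ 0} := this ▸ hi0
  simp only [Set.mem_setOf_eq, Pi.sub_apply, Pi.smul_apply, smul_eq_mul] at hi0'
  apply hi0'
  rw [ht, div_mul_cancel₀ _ hhi0, sub_self]

lemma ratioSet_finite (W : Submodule ℝ (ι → ℝ)) : (ratioSet W).Finite := by
  classical
  set c : Set ι → (ι → ℝ) := fun S =>
    if h : ∃ g, IsElementary W g ∧ {i | g i ≠ 0} = S then h.choose else 0 with hc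
  have : ratioSet W ⊆
      (fun p : Set ι × ι × ι => |c p.1 p.2.2| / |c p.1 p.2.1|) '' Set.univ := by
    rintro t ⟨g, hg, i, j, hi, hj, rfl⟩
    refine ⟨⟨{i | g i ≠ 0}, i, j⟩, Set.mem_univ _, ?_⟩
    have hex : ∃ g', IsElementary W g' ∧ {i | g' i ≠ 0} = {i | g i ≠ 0} := ⟨g, hg, rfl⟩
    have hcS : c {i | g i ≠ 0} = hex.choose := by simp [hc, dif_pos hex]
    obtain ⟨hel, hsupp⟩ := hex.choose_spec
    obtain ⟨s, hs, hgs⟩ := elementary_prop hg hel hsupp.symm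
    simp only [hcS]
    have hgk : ∀ k, g k = s * hex.choose k := fun k => by have := congrFun hgs k; simpa using this
    rw [hgk j, hgk i, abs_mul, abs_mul, mul_div_mul_left _ _ (abs_ne_zero.mpr hs)]
  exact Set.Finite.subset (Set.finite_univ.image _) this

lemma kappa_mono {ι' : Type*} [Fintype ι'] [DecidableEq ι'] {W' : Submodule ℝ (ι' → ℝ)}
    {W : Submodule ℝ (ι → ℝ)} (h : ratioSet W' ⊆ ratioSet W) :
    kappa W' ≤ kappa W := by
  rw [kappa_eq, kappa_eq]
  refine csSup_le_csSup ?_ ⟨1, Or.inl rfl⟩ (Set.union_subset_union_right _ h)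
  exact ((Set.finite_singleton 1).union (ratioSet_finite W)).bddAbove

lemma coordRestrict_apply {n : ℕ} (J : Finset (Fin n)) (x : Fin n → ℝ) (i : ↥J) :
    coordRestrict J x i = x ↑i := rfl

/-- Lift elementary vectors of the restriction. -/
lemma lift_restrict {n : ℕ} {W : Submodule ℝ (Fin n → ℝ)} {J : Finset (Fin n)}
    {g : ↥J → ℝ} (hg : IsElementary ((W ⊓ zeroOutside J).map (coordRestrict J)) g) :
    ∃ w, IsElementary W w ∧ coordRestrict J w = g := by
  obtain ⟨⟨w, ⟨hwW, hwZ⟩, hwg⟩, hgne, hgmin⟩ := hg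
  have hwJ : ∀ i, w i ≠ 0 → i ∈ J := by
    intro i hi
    by_contra hn
    exact hi (hwZ i hn)
  refine ⟨w, ⟨hwW, ?_, ?_⟩, hwg⟩
  · rintro rfl
    apply hgne
    rw [← hwg]
    simp
  · intro h hhW hhne hsub
    have hhZ : h ∈ zeroOutside J := by
      intro i hi
      by_contra hne
      exact hi (hwJ i (hsub hne))
    have hπne : coordRestrict J h ≠ 0 := by
      obtain ⟨i0, hi0⟩ : ∃ i, h i ≠ 0 := by
        by_contra hc; push_neg at hc; exact hhne (funext hc)
      intro hz
      exact hi0 (congrFun hz ⟨i0, hwJ i0 (hsub hi0)⟩)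
    have hsubg : {i | coordRestrict J h i ≠ 0} ⊆ {i | g i ≠ 0} := by
      intro i hi
      rw [← hwg]
      exact hsub hi
    have heq := hgmin _ ⟨h, ⟨hhW, hhZ⟩, rfl⟩ hπne hsubg
    have heq' := Set.ext_iff.mp heq
    ext k
    simp only [Set.mem_setOf_eq]
    constructor
    · exact fun hk => hsub hk
    · intro hk
      have hkJ : k ∈ J := hwJ k hk
      have : g ⟨k, hkJ⟩ ≠ 0 := by rw [← hwg]; exact hk
      exact (heq' ⟨k, hkJ⟩).mpr this

/-- Lift elementary vectors of the projection. -/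
lemma lift_proj {n : ℕ} {W : Submodule ℝ (Fin n → ℝ)} {J : Finset (Fin n)}
    {g : ↥J → ℝ} (hg : IsElementary (W.map (coordRestrict J)) g) :
    ∃ w, IsElementary W w ∧ coordRestrict J w = g := by
  obtain ⟨hgmem, hgne, hgmin⟩ := hg
  set A := {k : ℕ | ∃ w, w ∈ W ∧ coordRestrict J w = g ∧ {i | w i ≠ 0}.ncard = k} with hA
  have hAne : A.Nonempty := by
    obtain ⟨w, hw, hwg⟩ := hgmem
    exact ⟨_, w, hw, hwg, rfl⟩
  obtain ⟨w, hwW, hwg, hwcard⟩ := Nat.sInf_mem hAne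
  refine ⟨w, ⟨hwW, ?_, ?_⟩, hwg⟩
  · rintro rfl
    apply hgne
    rw [← hwg]
    simp
  · intro h hhW hhne hsub
    by_cases hph : coordRestrict J h = 0
    · exfalso
      obtain ⟨i0, hi0⟩ : ∃ i, h i ≠ 0 := by
        by_contra hc; push_neg at hc; exact hhne (funext hc)
      have hi0w : w i0 ≠ 0 := hsub hi0
      set t := w i0 / h i0 with ht
      have hw' : (w - t • h) ∈ W := W.sub_mem hwW (W.smul_mem _ hhW)
      have hπ : coordRestrict J (w - t • h) = g := by
        rw [map_sub, map_smul, hwg, hph]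
        simp
      have hss : {i | (w - t • h) i ≠ 0} ⊂ {i | w i ≠ 0} := by
        constructor
        · intro i hi
          simp only [Set.mem_setOf_eq, Pi.sub_apply, Pi.smul_apply, smul_eq_mul] at hi ⊢
          intro hwi
          apply hi
          have : h i = 0 := by
            by_contra hhi
            exact hsub hhi hwi
          simp [hwi, this]
        · intro hcon
          have : (w - t • h) i0 ≠ 0 := hcon hi0w
          apply this
          simp only [Pi.sub_apply, Pi.smul_apply, smul_eq_mul, ht]
          field_simp
          ring
      have hlt : {i | (w - t • h) i ≠ 0}.ncard < {i | w i ≠ 0}.ncard :=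
        Set.ncard_lt_ncard hss (Set.toFinite _)
      rw [hwcard] at hlt
      exact absurd (Nat.sInf_le (show _ ∈ A from ⟨_, hw', hπ, rfl⟩)) (not_le.mpr hlt)
    · have hsubg : {i | coordRestrict J h i ≠ 0} ⊆ {i | g i ≠ 0} := by
        intro i hi
        rw [← hwg]
        exact hsub hi
      have heq := hgmin _ ⟨h, hhW, rfl⟩ hph hsubg
      have heq' := Set.ext_iff.mp heq
      obtain ⟨i0, hi0⟩ : ∃ i, g i ≠ 0 := by
        by_contra hc; push_neg at hc; exact hgne (funext hc)
      have hhi0 : coordRestrict J h i0 ≠ 0 := (heq' i0).mpr hi0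
      set t := g i0 / coordRestrict J h i0 with ht
      have htne : t ≠ 0 := div_ne_zero hi0 hhi0
      have hd : g - t • coordRestrict J h = 0 := by
        by_contra hdne
        have hdmem : g - t • coordRestrict J h ∈ W.map (coordRestrict J) :=
          ⟨w - t • h, W.sub_mem hwW (W.smul_mem _ hhW), by rw [map_sub, map_smul, hwg]⟩
        have hds : {i | (g - t • coordRestrict J h) i ≠ 0} ⊆ {i | g i ≠ 0} := by
          intro i hi
          simp only [Set.mem_setOf_eq, Pi.sub_apply, Pi.smul_apply, smul_eq_mul] at hi ⊢
          intro hgi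
          apply hi
          have : coordRestrict J h i = 0 := by
            by_contra hhi
            exact (heq' i).mp hhi hgi
          simp [hgi, this]
        have hds' := Set.ext_iff.mp (hgmin _ hdmem hdne hds)
        have : (g - t • coordRestrict J h) i0 ≠ 0 := (hds' i0).mpr hi0
        apply this
        simp only [Pi.sub_apply, Pi.smul_apply, smul_eq_mul, ht]
        field_simp
        ring
      have hlift : coordRestrict J (t • h) = g := by
        rw [map_smul]
        have := sub_eq_zero.mp hd
        exact this.symm
      have hsupps : {i | (t • h) i ≠ 0} = {i | h i ≠ 0} := by
        ext i
        simp [htne]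
      have hle : {i | w i ≠ 0}.ncard ≤ {i | h i ≠ 0}.ncard := by
        rw [hwcard, ← hsupps]
        exact Nat.sInf_le (show _ ∈ A from ⟨_, W.smul_mem _ hhW, hlift, rfl⟩)
      exact Set.eq_of_subset_of_ncard_le hsub hle (Set.toFinite _)

/-- both the restriction `W_J = π_J(W ∩ ℝ^n_J)` and the projection `π_J(W)`
have circuit imbalance at most `κ_W`. -/
theorem kappa_restriction_projection_le {n : ℕ} (W : Submodule ℝ (Fin n → ℝ))
    (J : Finset (Fin n)) :
    kappa ((W ⊓ zeroOutside J).map (coordRestrict J)) ≤ kappa W ∧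
      kappa (W.map (coordRestrict J)) ≤ kappa W := by
  constructor
  · apply kappa_mono
    rintro t ⟨g, hg, i, j, hi, hj, rfl⟩
    obtain ⟨w, hw, hwg⟩ := lift_restrict hg
    rw [← hwg] at hi hj
    exact ⟨w, hw, ↑i, ↑j, hi, hj, by rw [← hwg]; rfl⟩
  · apply kappa_mono
    rintro t ⟨g, hg, i, j, hi, hj, rfl⟩
    obtain ⟨w, hw, hwg⟩ := lift_proj hg
    rw [← hwg] at hi hj
    exact ⟨w, hw, ↑i, ↑j, hi, hj, by rw [← hwg]; rfl⟩
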